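/- Let α = max{∠zxy, ∠zyx} for distinct points x, y, z in ℝⁿ, and τ = π − α. Then (1/π)·τ ≤ cos((∠zyx − ∠zxy)/2) ≤ τ. -/

import Mathlib

open EuclideanGeometry

private lemma aux4 {a b : ℝ} (ha : 0 ≤ a) (hab : a ≤ b) (hs : a + b ≤ Real.pi) :
    (1 / Real.pi) * (Real.pi - b) ≤ Real.cos ((b - a) / 2) ∧
    Real.cos ((b - a) / 2) ≤ Real.pi - b := by
  have hpi := Real.pi_pos
  have ht0 : 0 ≤ (b - a) / 2 := by linarith
  have ht2 : (b - a) / 2 ≤ Real.pi / 2 := by linarith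
  constructor
  · have := Real.one_sub_mul_le_cos ht0 ht2
    have h2 : (1 / Real.pi) * (Real.pi - b) ≤ 1 - 2 / Real.pi * ((b - a) / 2) := by
      have h3 : (1:ℝ) - 2 / Real.pi * ((b - a) / 2) = (Real.pi - (b - a)) / Real.pi := by
        field_simp
      rw [h3, one_div, inv_mul_eq_div]
      gcongr
      linarith
    linarith
  · rcases le_or_gt b (Real.pi / 2) with hb | hb
    · have := Real.cos_le_one ((b - a) / 2)
      have := Real.two_le_pi
      linarith
    · have h1 : Real.cos ((b - a) / 2) ≤ Real.cos (b - Real.pi / 2) := by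
        apply Real.cos_le_cos_of_nonneg_of_le_pi (by linarith) (by linarith) (by linarith)
      have h2 : Real.cos (b - Real.pi / 2) = Real.sin b := by
        rw [← Real.cos_neg, neg_sub, Real.cos_pi_div_two_sub]
      have h3 : Real.sin b = Real.sin (Real.pi - b) := (Real.sin_pi_sub b).symm
      have h4 : Real.sin (Real.pi - b) ≤ Real.pi - b := Real.sin_le (by linarith)
      linarith

theorem stmt4 (n : ℕ) (x y z : EuclideanSpace ℝ (Fin n))
    (hxy : x ≠ y) (hxz : x ≠ z) (hyz : y ≠ z) :
    (1 / Real.pi) * (Real.pi - max (∠ z x y) (∠ z y x)) ≤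
      Real.cos ((∠ z y x - ∠ z x y) / 2) ∧
    Real.cos ((∠ z y x - ∠ z x y) / 2) ≤
      Real.pi - max (∠ z x y) (∠ z y x) := by
  have hsum := angle_add_angle_add_angle_eq_pi y hxz
  rw [angle_comm x y z] at hsum
  have hc : 0 ≤ ∠ y z x := angle_nonneg _ _ _
  have ha : 0 ≤ ∠ z x y := angle_nonneg _ _ _
  have hb : 0 ≤ ∠ z y x := angle_nonneg _ _ _
  rcases le_total (∠ z x y) (∠ z y x) with h | h
  · rw [max_eq_right h]
    exact aux4 ha h (by linarith)
  · rw [max_eq_left h]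
    have key := aux4 hb h (by linarith)
    have : Real.cos ((∠ z y x - ∠ z x y) / 2) = Real.cos ((∠ z x y - ∠ z y x) / 2) := by
      rw [← Real.cos_neg, ← neg_div, neg_sub]
    rw [this]
    exact key
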